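/- Let h : ℝ^d → ℝ be convex, F : ℝ^d → ℝ be differentiable with L_F-Lipschitz gradient, and set Φ = F + h. Let A ∈ ℝ^{d×d} be symmetric with A ⪰ ρ I_d (ρ > 0), let 0 < γ ≤ 3ρ/(4 L_F), let w, x ∈ ℝ^d, let x⁺ be a minimizer over ℝ^d of z ↦ ⟨w, z⟩ + (1/(2γ)) (z − x)ᵀ A (z − x) + h(z), and set 𝒢 = (x − x⁺)/γ. Then Φ(x⁺) ≤ Φ(x) − (3γρ/8) ‖𝒢‖² + (γ/ρ) ‖w − ∇F(x)‖². -/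

import Mathlib

open scoped RealInnerProductSpace

private lemma descent_lemma {d : ℕ} (LF : ℝ) (hLF : 0 < LF)
    (F : EuclideanSpace ℝ (Fin d) → ℝ)
    (F' : EuclideanSpace ℝ (Fin d) → EuclideanSpace ℝ (Fin d))
    (hF : ∀ z, HasGradientAt F (F' z) z)
    (hFlip : ∀ z₁ z₂, ‖F' z₁ - F' z₂‖ ≤ LF * ‖z₁ - z₂‖)
    (x y : EuclideanSpace ℝ (Fin d)) :
    F y ≤ F x + ⟪F' x, y - x⟫ + LF / 2 * ‖y - x‖ ^ 2 := by
  set u := y - x with hu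
  have hline : ∀ t : ℝ, HasDerivAt (fun s : ℝ => x + s • u) u t := by
    intro t
    simpa using ((hasDerivAt_id t).smul_const u).const_add x
  have hg : ∀ t : ℝ, HasDerivAt (fun s : ℝ => F (x + s • u)) ⟪F' (x + t • u), u⟫ t := by
    intro t
    have := (hF (x + t • u)).hasFDerivAt.comp_hasDerivAt t (hline t)
    simpa [InnerProductSpace.toDual_apply_apply, Function.comp_def] using this
  have hFcont : Continuous F' := by
    have : LipschitzWith LF.toNNReal F' :=
      LipschitzWith.of_dist_le_mul fun a b => by
        simpa [dist_eq_norm, Real.coe_toNNReal LF hLF.le] using hFlip a b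
    exact this.continuous
  have φcont : Continuous fun t : ℝ => ⟪F' (x + t • u), u⟫ :=
    (hFcont.comp (by continuity)).inner continuous_const
  have hInt : F y - F x = ∫ t in (0:ℝ)..1, ⟪F' (x + t • u), u⟫ := by
    have := intervalIntegral.integral_eq_sub_of_hasDerivAt (f := fun s : ℝ => F (x + s • u))
      (fun t _ => hg t) (φcont.intervalIntegrable 0 1)
    simpa [hu] using this.symm
  have hbound : ∀ t ∈ Set.Icc (0:ℝ) 1,
      ⟪F' (x + t • u), u⟫ ≤ ⟪F' x, u⟫ + (LF * ‖u‖ ^ 2) * t := by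
    intro t ht
    have h1 : ⟪F' (x + t • u) - F' x, u⟫ ≤ ‖F' (x + t • u) - F' x‖ * ‖u‖ :=
      real_inner_le_norm _ _
    have h2 : ‖F' (x + t • u) - F' x‖ ≤ LF * (t * ‖u‖) := by
      have := hFlip (x + t • u) x
      simpa [norm_smul, abs_of_nonneg ht.1] using this
    have h3 : ‖F' (x + t • u) - F' x‖ * ‖u‖ ≤ LF * (t * ‖u‖) * ‖u‖ :=
      mul_le_mul_of_nonneg_right h2 (norm_nonneg _)
    have h4 : ⟪F' (x + t • u) - F' x, u⟫ = ⟪F' (x + t • u), u⟫ - ⟪F' x, u⟫ :=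
      inner_sub_left _ _ _
    have h5 : LF * (t * ‖u‖) * ‖u‖ = (LF * ‖u‖ ^ 2) * t := by ring
    linarith [h1, h3, h4.le, h4.ge, h5.le, h5.ge]
  have hint2 : ∫ t in (0:ℝ)..1, (⟪F' x, u⟫ + (LF * ‖u‖ ^ 2) * t)
      = ⟪F' x, u⟫ + LF / 2 * ‖u‖ ^ 2 := by
    rw [intervalIntegral.integral_add (intervalIntegrable_const)
      ((intervalIntegral.intervalIntegrable_id).const_mul _),
      intervalIntegral.integral_const, intervalIntegral.integral_const_mul,
      integral_id]
    norm_num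
    ring
  have hmono : (∫ t in (0:ℝ)..1, ⟪F' (x + t • u), u⟫)
      ≤ ∫ t in (0:ℝ)..1, (⟪F' x, u⟫ + (LF * ‖u‖ ^ 2) * t) := by
    apply intervalIntegral.integral_mono_on (by norm_num)
      (φcont.intervalIntegrable 0 1)
      ((continuous_const.add (continuous_const.mul continuous_id)).intervalIntegrable 0 1)
    intro t ht
    exact hbound t ht
  linarith [hInt, hmono, hint2.le, hint2.ge]

private lemma final_arith (ρ γ LF a b Q P J Fx Fxp hx hxp : ℝ)
    (hρ : 0 < ρ) (hγ : 0 < γ) (hLF : 0 < LF) (hγLF : γ * (4 * LF) ≤ 3 * ρ)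
    (ha0 : 0 ≤ a) (hb0 : 0 ≤ b) (hQb : ρ * b ^ 2 ≤ Q)
    (hsub : hxp ≤ hx + P - (1 / γ) * Q)
    (hdesc : Fxp ≤ Fx + J + LF / 2 * b ^ 2)
    (hcs : J + P ≤ a * b) :
    Fxp + hxp ≤ Fx + hx - (3 * γ * ρ / 8) * (γ⁻¹ ^ 2 * b ^ 2) + (γ / ρ) * a ^ 2 := by
  have hQuse : -(1 / γ) * Q ≤ -(1 / γ) * (ρ * b ^ 2) := by
    have h0 : 0 < 1 / γ := by positivity
    nlinarith [hQb]
  have hfin : (3 * γ * ρ / 8) * (γ⁻¹ ^ 2 * b ^ 2) = 3 * ρ / (8 * γ) * b ^ 2 := by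
    field_simp
  have hyoung : a * b ≤ γ / ρ * a ^ 2 + ρ / (4 * γ) * b ^ 2 := by
    rw [div_mul_eq_mul_div, div_mul_eq_mul_div, div_add_div _ _ (by positivity) (by positivity),
      le_div_iff₀ (by positivity)]
    nlinarith [sq_nonneg (2 * γ * a - ρ * b)]
  have hLFb : LF / 2 * b ^ 2 ≤ 3 * ρ / (8 * γ) * b ^ 2 := by
    rw [div_mul_eq_mul_div, div_mul_eq_mul_div, div_le_div_iff₀ (by norm_num) (by positivity)]
    nlinarith [mul_le_mul_of_nonneg_right hγLF (sq_nonneg b)]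
  have hργ : ρ / (4 * γ) * b ^ 2 + 3 * ρ / (8 * γ) * b ^ 2 + 3 * ρ / (8 * γ) * b ^ 2
      + (-(1 / γ) * (ρ * b ^ 2)) = 0 := by
    field_simp
    ring
  rw [hfin]
  linarith [hsub, hdesc, hcs, hQuse, hyoung, hLFb, hργ.le, hργ.ge]


/-- One-step descent for the proximal mirror step: with `h` convex, `F`
differentiable with `L_F`-Lipschitz gradient, `Φ = F + h`, `A ⪰ ρ I` symmetric,
`0 < γ ≤ 3ρ/(4L_F)`, and `x⁺` a minimizer of `z ↦ ⟨w,z⟩ + (1/2γ)(z−x)ᵀA(z−x) + h(z)`,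
setting `𝒢 = (x − x⁺)/γ` one has
`Φ(x⁺) ≤ Φ(x) − (3γρ/8)‖𝒢‖² + (γ/ρ)‖w − ∇F(x)‖²`. -/
theorem stmt_7 {d : ℕ} (ρ γ LF : ℝ) (hρ : 0 < ρ) (hLF : 0 < LF)
    (hγ : 0 < γ) (hγle : γ ≤ 3 * ρ / (4 * LF))
    (h : EuclideanSpace ℝ (Fin d) → ℝ) (hconv : ConvexOn ℝ Set.univ h)
    (F : EuclideanSpace ℝ (Fin d) → ℝ)
    (F' : EuclideanSpace ℝ (Fin d) → EuclideanSpace ℝ (Fin d))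
    (hF : ∀ z, HasGradientAt F (F' z) z)
    (hFlip : ∀ z₁ z₂, ‖F' z₁ - F' z₂‖ ≤ LF * ‖z₁ - z₂‖)
    (A : EuclideanSpace ℝ (Fin d) →L[ℝ] EuclideanSpace ℝ (Fin d))
    (hAsymm : ∀ v w, ⟪A v, w⟫ = ⟪v, A w⟫)
    (hApos : ∀ v, ρ * ‖v‖ ^ 2 ≤ ⟪A v, v⟫)
    (w x xp : EuclideanSpace ℝ (Fin d))
    (hmin : ∀ z, ⟪w, xp⟫ + (1 / (2 * γ)) * ⟪A (xp - x), xp - x⟫ + h xp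
      ≤ ⟪w, z⟫ + (1 / (2 * γ)) * ⟪A (z - x), z - x⟫ + h z) :
    F xp + h xp ≤ F x + h x - (3 * γ * ρ / 8) * ‖γ⁻¹ • (x - xp)‖ ^ 2
      + (γ / ρ) * ‖w - F' x‖ ^ 2 := by
  have hQ0 : (0:ℝ) ≤ ⟪A (xp - x), xp - x⟫ := le_trans (by positivity) (hApos (xp - x))
  -- step inequality for each t ∈ (0,1]
  have hstep : ∀ t : ℝ, 0 < t → t ≤ 1 →
      h xp ≤ h x + ⟪w, x - xp⟫ + ((t - 2) / (2 * γ)) * ⟪A (xp - x), xp - x⟫ := by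
    intro t ht0 ht1
    have hz := hmin (xp + t • (x - xp))
    have hzx : xp + t • (x - xp) - x = (1 - t) • (xp - x) := by
      simp only [smul_sub, sub_smul, one_smul]
      abel
    have hinQ : ⟪A ((1 - t) • (xp - x)), (1 - t) • (xp - x)⟫
        = (1 - t) ^ 2 * ⟪A (xp - x), xp - x⟫ := by
      rw [map_smul, real_inner_smul_left, real_inner_smul_right]
      ring
    have hinw : ⟪w, xp + t • (x - xp)⟫ = ⟪w, xp⟫ + t * ⟪w, x - xp⟫ := by
      rw [inner_add_right, real_inner_smul_right]
    have hcv : h (xp + t • (x - xp)) ≤ t * h x + (1 - t) * h xp := by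
      have heq : xp + t • (x - xp) = t • x + (1 - t) • xp := by
        simp only [smul_sub, sub_smul, one_smul]
        abel
      rw [heq]
      exact hconv.2 (Set.mem_univ x) (Set.mem_univ xp) ht0.le (by linarith) (by ring)
    rw [hzx, hinQ, hinw] at hz
    have hexp : t * (h x + ⟪w, x - xp⟫ + ((t - 2) / (2 * γ)) * ⟪A (xp - x), xp - x⟫)
        = t * h x + t * ⟪w, x - xp⟫
          + (1 / (2 * γ) * ((1 - t) ^ 2 * ⟪A (xp - x), xp - x⟫)
            - 1 / (2 * γ) * ⟪A (xp - x), xp - x⟫) := by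
      field_simp
      ring
    have hcv' : (1 - t) * h xp = h xp - t * h xp := by ring
    have key : t * h xp
        ≤ t * (h x + ⟪w, x - xp⟫ + ((t - 2) / (2 * γ)) * ⟪A (xp - x), xp - x⟫) := by
      linarith [hz, hcv, hexp.le, hexp.ge, hcv'.le, hcv'.ge]
    exact le_of_mul_le_mul_left key ht0
  -- limit t → 0⁺
  have hsub : h xp ≤ h x + ⟪w, x - xp⟫ - (1 / γ) * ⟪A (xp - x), xp - x⟫ := by
    refine le_of_forall_pos_le_add fun ε hε => ?_
    set Q := ⟪A (xp - x), xp - x⟫ with hQdef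
    set t := min 1 (γ * ε / (Q + 1)) with htdef
    have ht0 : 0 < t := lt_min one_pos (by positivity)
    have ht1 : t ≤ 1 := min_le_left _ _
    have hs := hstep t ht0 ht1
    have htle : t ≤ γ * ε / (Q + 1) := min_le_right _ _
    have h1 : t * Q ≤ γ * ε / (Q + 1) * Q := mul_le_mul_of_nonneg_right htle hQ0
    have h2 : γ * ε / (Q + 1) * Q ≤ γ * ε := by
      rw [div_mul_eq_mul_div, div_le_iff₀ (by linarith)]
      nlinarith [hQ0, hγ, hε]
    have heq : ((t - 2) / (2 * γ)) * Q + (1 / γ) * Q = t * Q / (2 * γ) := by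
      field_simp
      ring
    have h3 : t * Q / (2 * γ) ≤ ε := by
      rw [div_le_iff₀ (by positivity)]
      nlinarith [h1, h2, hε, hγ]
    linarith [hs, heq.le, heq.ge, h3]
  -- smoothness at x, evaluated at xp
  have hdesc : F xp ≤ F x + ⟪F' x, xp - x⟫ + LF / 2 * ‖xp - x‖ ^ 2 :=
    descent_lemma LF hLF F F' hF hFlip x xp
  -- Cauchy–Schwarz
  have hcs : ⟪F' x, xp - x⟫ + ⟪w, x - xp⟫ ≤ ‖w - F' x‖ * ‖xp - x‖ := by
    have h1 : ⟪F' x - w, xp - x⟫ ≤ ‖F' x - w‖ * ‖xp - x‖ := real_inner_le_norm _ _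
    have h2 : ⟪F' x - w, xp - x⟫ = ⟪F' x, xp - x⟫ - ⟪w, xp - x⟫ := inner_sub_left _ _ _
    have h3 : ⟪w, x - xp⟫ = -⟪w, xp - x⟫ := by
      rw [← inner_neg_right]
      congr 1
      abel
    rw [norm_sub_rev] at h1
    linarith [h1, h2.le, h2.ge, h3.le, h3.ge]
  -- norm identity
  have hGnorm : ‖γ⁻¹ • (x - xp)‖ ^ 2 = γ⁻¹ ^ 2 * ‖xp - x‖ ^ 2 := by
    rw [norm_smul, Real.norm_eq_abs, abs_of_pos (inv_pos.mpr hγ), mul_pow, norm_sub_rev]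
  rw [hGnorm]
  have hγLF : γ * (4 * LF) ≤ 3 * ρ := (le_div_iff₀ (by positivity)).mp hγle
  exact final_arith ρ γ LF (‖w - F' x‖) (‖xp - x‖) (⟪A (xp - x), xp - x⟫)
    (⟪w, x - xp⟫) (⟪F' x, xp - x⟫) (F x) (F xp) (h x) (h xp)
    hρ hγ hLF hγLF (norm_nonneg _) (norm_nonneg _) (hApos (xp - x)) hsub hdesc hcs
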